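/- arXiv:2003.12038 — 6 statements merged into one kernel-verified Lean document; each statement's English description precedes it below -/
import Mathlib

section
/- Let (x_n)_{n≥1} be a sequence of distinct real numbers, let (c_n)_{n≥1} be nonnegative reals with 0 < Σ_{n≥1} c_n < ∞, and let μ = Σ_{n≥1} c_n δ_{x_n}. If q ∈ (0,1) and Σ_{n≥1} (c_n)^q < ∞, then D⁻_μ(q) = 0. -/
open MeasureTheory Filter Set Topology ENNReal

noncomputable section

/-- `I_μ(q, ε) = ∫ μ(B(x,ε))^{q-1} dμ(x)`, integrated over `{x : μ(B(x,ε)) > 0}`. -/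
def fracIntegral (μ : Measure ℝ) (q ε : ℝ) : ℝ≥0∞ :=
  ∫⁻ x in {x : ℝ | 0 < μ (Ioo (x - ε) (x + ε))}, μ (Ioo (x - ε) (x + ε)) ^ (q - 1) ∂μ

/-- lower q-generalized fractal dimension. -/
def Dlower (μ : Measure ℝ) (q : ℝ) : ℝ :=
  liminf (fun ε : ℝ => Real.log (fracIntegral μ q ε).toReal / ((q - 1) * Real.log ε)) (𝓝[>] 0)

/-- upper q-generalized fractal dimension. -/
def Dupper (μ : Measure ℝ) (q : ℝ) : ℝ :=
  limsup (fun ε : ℝ => Real.log (fracIntegral μ q ε).toReal / ((q - 1) * Real.log ε)) (𝓝[>] 0)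

/-- index set of the hydrogen orbitals. -/
structure HIndex where
  n : ℕ
  l : ℕ
  m : ℤ
  hn : 1 ≤ n
  hl : l < n
  hm : -(l : ℤ) ≤ m ∧ m ≤ (l : ℤ)

instance : Fact ((1 : ℝ≥0∞) ≤ 2) := ⟨one_le_two⟩

/-- the bound-state space -/
abbrev Hspace := lp (fun _ : HIndex => ℂ) 2

/-- eigenvalues of the hydrogen Hamiltonian -/
def lam (Λ : ℝ) (n : ℕ) : ℝ := -Λ / (n : ℝ) ^ 2

/-- spectral measure of a bound state -/
def specMeasure (Λ : ℝ) (ψ : Hspace) : Measure ℝ :=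
  Measure.sum fun i : HIndex =>
    ENNReal.ofReal (‖ψ i‖ ^ 2) • Measure.dirac (lam Λ i.n)
lemma rpow_anti' {a b : ℝ≥0∞} {z : ℝ} (hz : z ≤ 0) (hab : a ≤ b) : b ^ z ≤ a ^ z := by
  rw [← neg_neg z, ENNReal.rpow_neg b, ENNReal.rpow_neg a, ENNReal.inv_le_inv]
  exact ENNReal.rpow_le_rpow hab (neg_nonneg.2 hz)

theorem lower_dimension_zero_of_summable_rpow
    (x : ℕ → ℝ) (hx : Function.Injective x)
    (c : ℕ → ℝ) (hc : ∀ n, 0 ≤ c n) (hsc : Summable c) (hpos : 0 < ∑' n, c n)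
    (μ : Measure ℝ)
    (hμ : μ = Measure.sum fun n : ℕ => ENNReal.ofReal (c n) • Measure.dirac (x n))
    (q : ℝ) (hq : q ∈ Ioo (0 : ℝ) 1)
    (hsq : Summable fun n => c n ^ q) :
    Dlower μ q = 0 := by
  obtain ⟨hq0, hq1⟩ := hq
  have hq1' : q - 1 ≤ 0 := by linarith
  set T : ℝ := ∑' n, c n with hT
  set B : ℝ := ∑' n, c n ^ q with hB
  have hB0 : 0 ≤ B := tsum_nonneg fun n => Real.rpow_nonneg (hc n) q
  -- lintegral against μ
  have hlint : ∀ f : ℝ → ℝ≥0∞, ∫⁻ y, f y ∂μ = ∑' n, ENNReal.ofReal (c n) * f (x n) := by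
    intro f
    rw [hμ, lintegral_sum_measure]
    simp [lintegral_smul_measure, lintegral_dirac]
  -- atoms
  have hatom : ∀ n, μ {x n} = ENNReal.ofReal (c n) := by
    intro n
    rw [hμ, Measure.sum_apply _ (measurableSet_singleton _)]
    rw [tsum_eq_single n]
    · simp [Measure.dirac_apply]
    · intro m hmn
      have : x m ≠ x n := fun h => hmn (hx h)
      simp [Measure.dirac_apply, Set.indicator_of_notMem, this]
  have huniv : μ Set.univ = ENNReal.ofReal T := by
    rw [hμ, Measure.sum_apply _ MeasurableSet.univ, hT,
      ENNReal.ofReal_tsum_of_nonneg hc hsc]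
    simp
  have hTtop : ENNReal.ofReal T ≠ ⊤ := ENNReal.ofReal_ne_top
  -- measurability of the ball-measure function
  have hg : ∀ ε : ℝ, Measurable fun y : ℝ => μ (Ioo (y - ε) (y + ε)) := by
    intro ε
    have h : ∀ y : ℝ, μ (Ioo (y - ε) (y + ε)) =
        ∑' n, Set.indicator (Ioo (x n - ε) (x n + ε)) (fun _ => ENNReal.ofReal (c n)) y := by
      intro y
      rw [hμ, Measure.sum_apply _ measurableSet_Ioo]
      refine tsum_congr fun n => ?_
      rw [Measure.smul_apply, Measure.dirac_apply, smul_eq_mul]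
      by_cases hmem : x n ∈ Ioo (y - ε) (y + ε)
      · obtain ⟨hm1, hm2⟩ := hmem
        have hmem : x n ∈ Ioo (y - ε) (y + ε) := ⟨hm1, hm2⟩
        have h' : y ∈ Ioo (x n - ε) (x n + ε) := ⟨by linarith, by linarith⟩
        simp [Set.indicator_of_mem hmem, Set.indicator_of_mem h']
      · have h' : y ∉ Ioo (x n - ε) (x n + ε) := fun hy =>
          hmem ⟨by linarith [hy.1, hy.2], by linarith [hy.1, hy.2]⟩
        simp [Set.indicator_of_notMem hmem, Set.indicator_of_notMem h']
    simp only [h]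
    exact Measurable.ennreal_tsum fun n => measurable_const.indicator measurableSet_Ioo
  -- choose an atom with positive weight
  obtain ⟨n0, hn0⟩ : ∃ n, 0 < c n := by
    by_contra h
    push_neg at h
    have : ∀ n, c n = 0 := fun n => le_antisymm (h n) (hc n)
    simp [hT, this] at hpos
  set A : ℝ≥0∞ := ENNReal.ofReal (c n0) * (ENNReal.ofReal T) ^ (q - 1) with hA
  have hT0 : 0 < ENNReal.ofReal T := ENNReal.ofReal_pos.2 hpos
  have hA0 : 0 < A := by
    apply ENNReal.mul_pos
    · exact (ENNReal.ofReal_pos.2 hn0).ne'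
    · exact (ENNReal.rpow_pos hT0 hTtop).ne'
  have hAtop : A ≠ ⊤ :=
    ENNReal.mul_ne_top ENNReal.ofReal_ne_top
      (by
        rw [← neg_neg (q - 1), ENNReal.rpow_neg]
        exact (ENNReal.inv_lt_top.2 (ENNReal.rpow_pos hT0 hTtop)).ne)
  -- upper bound
  have hub : ∀ ε : ℝ, 0 < ε → fracIntegral μ q ε ≤ ENNReal.ofReal B := by
    intro ε hε
    have h1 : fracIntegral μ q ε ≤ ∫⁻ y, μ (Ioo (y - ε) (y + ε)) ^ (q - 1) ∂μ :=
      setLIntegral_le_lintegral _ _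
    have h2 : (∫⁻ y, μ (Ioo (y - ε) (y + ε)) ^ (q - 1) ∂μ) ≤ ∫⁻ y, μ {y} ^ (q - 1) ∂μ := by
      refine lintegral_mono fun y => rpow_anti' hq1' (measure_mono ?_)
      intro z hz
      simp only [mem_singleton_iff] at hz
      exact hz ▸ ⟨by linarith, by linarith⟩
    have h3 : (∫⁻ y, μ {y} ^ (q - 1) ∂μ) = ENNReal.ofReal B := by
      rw [hlint]
      rw [hB, ENNReal.ofReal_tsum_of_nonneg (fun n => Real.rpow_nonneg (hc n) q) hsq]
      refine tsum_congr fun n => ?_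
      rw [hatom n]
      rcases eq_or_lt_of_le (hc n) with h0 | h0
      · simp [← h0, Real.zero_rpow hq0.ne']
      · rw [ENNReal.ofReal_rpow_of_pos h0, ← ENNReal.ofReal_mul (hc n)]
        congr 1
        nth_rewrite 1 [← Real.rpow_one (c n)]
        rw [← Real.rpow_add h0]
        norm_num
    exact h1.trans (h2.trans h3.le)
  -- lower bound
  have hlb : ∀ ε : ℝ, 0 < ε → A ≤ fracIntegral μ q ε := by
    intro ε hε
    set S : Set ℝ := {y : ℝ | 0 < μ (Ioo (y - ε) (y + ε))} with hS
    have hSm : MeasurableSet S := measurableSet_lt measurable_const (hg ε)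
    have hxS : x n0 ∈ S := by
      have hsub : {x n0} ⊆ Ioo (x n0 - ε) (x n0 + ε) := by
        intro z hz
        simp only [mem_singleton_iff] at hz
        exact hz ▸ ⟨by linarith, by linarith⟩
      have : (0 : ℝ≥0∞) < μ {x n0} := by rw [hatom n0]; exact ENNReal.ofReal_pos.2 hn0
      exact lt_of_lt_of_le this (measure_mono hsub)
    have hle : (ENNReal.ofReal (c n0) • Measure.dirac (x n0)) ≤ μ := by
      rw [hμ]; exact Measure.le_sum _ n0
    have key : A ≤ ∫⁻ y in S, μ (Ioo (y - ε) (y + ε)) ^ (q - 1)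
        ∂(ENNReal.ofReal (c n0) • Measure.dirac (x n0)) := by
      rw [Measure.restrict_smul, lintegral_smul_measure]
      classical
      rw [MeasureTheory.restrict_dirac' hSm, if_pos hxS, lintegral_dirac]
      refine mul_le_mul_right (rpow_anti' hq1' ?_) _
      rw [← huniv]
      exact measure_mono (subset_univ _)
    refine key.trans (lintegral_mono' (Measure.restrict_mono le_rfl hle) le_rfl)
  -- real bounds
  have hItop : ∀ ε : ℝ, 0 < ε → fracIntegral μ q ε ≠ ⊤ := fun ε hε =>
    ((hub ε hε).trans_lt ENNReal.ofReal_lt_top).ne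
  have haR : 0 < A.toReal := ENNReal.toReal_pos hA0.ne' hAtop
  set C : ℝ := max |Real.log A.toReal| |Real.log B| with hC
  have hC0 : 0 ≤ C := le_trans (abs_nonneg _) (le_max_left _ _)
  have hlog : ∀ ε : ℝ, 0 < ε → |Real.log (fracIntegral μ q ε).toReal| ≤ C := by
    intro ε hε
    have h1 : A.toReal ≤ (fracIntegral μ q ε).toReal :=
      ENNReal.toReal_mono (hItop ε hε) (hlb ε hε)
    have h2 : (fracIntegral μ q ε).toReal ≤ B := by
      have := ENNReal.toReal_mono ENNReal.ofReal_ne_top (hub ε hε)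
      rwa [ENNReal.toReal_ofReal hB0] at this
    rw [abs_le]
    constructor
    · have : Real.log A.toReal ≤ Real.log (fracIntegral μ q ε).toReal :=
        Real.log_le_log haR h1
      calc -C ≤ -|Real.log A.toReal| := by simp [hC, le_max_left]
        _ ≤ Real.log A.toReal := neg_abs_le _
        _ ≤ _ := this
    · calc Real.log (fracIntegral μ q ε).toReal ≤ Real.log B :=
            Real.log_le_log (lt_of_lt_of_le haR h1) h2
        _ ≤ |Real.log B| := le_abs_self _
        _ ≤ C := le_max_right _ _
  -- the limit
  have hden : Tendsto (fun ε : ℝ => (q - 1) * Real.log ε) (𝓝[>] 0) atTop :=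
    (tendsto_const_mul_atTop_of_neg (by linarith)).2 Real.tendsto_log_nhdsGT_zero
  have hCten : Tendsto (fun ε : ℝ => C / ((q - 1) * Real.log ε)) (𝓝[>] 0) (𝓝 0) :=
    Tendsto.div_atTop tendsto_const_nhds hden
  have hten : Tendsto
      (fun ε : ℝ => Real.log (fracIntegral μ q ε).toReal / ((q - 1) * Real.log ε))
      (𝓝[>] 0) (𝓝 0) := by
    refine squeeze_zero_norm' ?_ hCten
    filter_upwards [hden.eventually_ge_atTop 1, self_mem_nhdsWithin] with ε h1 hε
    have hd : 0 < (q - 1) * Real.log ε := lt_of_lt_of_le zero_lt_one h1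
    rw [Real.norm_eq_abs, abs_div, abs_of_pos hd]
    gcongr
    exact hlog ε hε
  exact hten.liminf_eq
end
end

section
/- Let (x_n)_{n≥1} be a sequence of distinct real numbers, let (c_n)_{n≥1} be nonnegative reals with Σ_{n≥1} c_n < ∞, and let μ = Σ_{n≥1} c_n δ_{x_n}. Then for every q ∈ (0,1) and every ε > 0, I_μ(q,ε) ≤ Σ_{n≥1} (c_n)^q, where both sides are allowed to take the value +∞. -/
open MeasureTheory Filter Set Topology ENNReal

noncomputable section

theorem fracIntegral_le_tsum_rpow
    (x : ℕ → ℝ) (hx : Function.Injective x)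
    (c : ℕ → ℝ) (hc : ∀ n, 0 ≤ c n) (hsc : Summable c)
    (μ : Measure ℝ)
    (hμ : μ = Measure.sum fun n : ℕ => ENNReal.ofReal (c n) • Measure.dirac (x n))
    (q : ℝ) (hq : q ∈ Ioo (0 : ℝ) 1) (ε : ℝ) (hε : 0 < ε) :
    fracIntegral μ q ε ≤ ∑' n : ℕ, ENNReal.ofReal (c n) ^ q := by
  classical
  obtain ⟨hq0, hq1⟩ := hq
  set S := {y : ℝ | 0 < μ (Ioo (y - ε) (y + ε))} with hS
  have key : ∀ n, ∫⁻ y in S, μ (Ioo (y - ε) (y + ε)) ^ (q - 1)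
      ∂(ENNReal.ofReal (c n) • Measure.dirac (x n)) ≤ ENNReal.ofReal (c n) ^ q := by
    intro n
    rw [Measure.restrict_smul, lintegral_smul_measure, setLIntegral_dirac]
    split_ifs with h
    · rcases eq_or_lt_of_le (hc n) with h0 | h0
      · simp [← h0]
      · have ha : (0 : ℝ≥0∞) < ENNReal.ofReal (c n) := ENNReal.ofReal_pos.2 h0
        have hle : ENNReal.ofReal (c n) ≤ μ (Ioo (x n - ε) (x n + ε)) := by
          rw [hμ]
          have : ENNReal.ofReal (c n)
              = (ENNReal.ofReal (c n) • Measure.dirac (x n)) (Ioo (x n - ε) (x n + ε)) := by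
            rw [Measure.smul_apply, Measure.dirac_apply]
            simp [indicator_of_mem, mem_Ioo, hε]
          rw [this]
          exact Measure.le_sum _ n _
        have hmono : μ (Ioo (x n - ε) (x n + ε)) ^ (q - 1)
            ≤ ENNReal.ofReal (c n) ^ (q - 1) := by
          rw [show q - 1 = -(1 - q) by ring, ENNReal.rpow_neg, ENNReal.rpow_neg]
          exact ENNReal.inv_le_inv.mpr (ENNReal.rpow_le_rpow hle (by linarith))
        calc ENNReal.ofReal (c n) * μ (Ioo (x n - ε) (x n + ε)) ^ (q - 1)
            ≤ ENNReal.ofReal (c n) * ENNReal.ofReal (c n) ^ (q - 1) :=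
              mul_le_mul_right hmono _
          _ = ENNReal.ofReal (c n) ^ (1 : ℝ) * ENNReal.ofReal (c n) ^ (q - 1) := by
              rw [ENNReal.rpow_one]
          _ = ENNReal.ofReal (c n) ^ (1 + (q - 1)) :=
              (ENNReal.rpow_add _ _ ha.ne' ENNReal.ofReal_ne_top).symm
          _ = ENNReal.ofReal (c n) ^ q := by norm_num
    · simp
  calc fracIntegral μ q ε
      = ∑' n, ∫⁻ y in S, μ (Ioo (y - ε) (y + ε)) ^ (q - 1)
          ∂(ENNReal.ofReal (c n) • Measure.dirac (x n)) := by
        rw [fracIntegral, ← hS]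
        conv_lhs => rw [hμ]
        rw [Measure.restrict_sum_of_countable, lintegral_sum_measure]
        simp_rw [← hμ]
    _ ≤ ∑' n : ℕ, ENNReal.ofReal (c n) ^ q := ENNReal.tsum_le_tsum key
end
end

section
/- For every ψ ∈ 𝓗 and every δ > 0, there exists φ ∈ 𝓗 with ‖ψ − φ‖ < δ such that D⁻_{μ_φ}(q) = 0 for all q ∈ (0,1). In particular, for each q ∈ (0,1) the set {ψ ∈ 𝓗 : D⁻_{μ_ψ}(q) = 0} is dense in 𝓗. -/
open MeasureTheory Filter Set Topology ENNReal

noncomputable section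

/-! ### Auxiliary material -/

instance : Countable HIndex := by
  have : Function.Injective (fun i : HIndex => (i.n, i.l, i.m)) := by
    rintro ⟨n, l, m, _, _, _⟩ ⟨n', l', m', _, _, _⟩ h
    simp only [Prod.mk.injEq] at h
    obtain ⟨rfl, rfl, rfl⟩ := h
    rfl
  exact this.countable

/-- weight of an index -/
def wco (φ : Hspace) (j : HIndex) : ℝ≥0∞ := ENNReal.ofReal (‖φ j‖ ^ 2)

/-- atom position of an index -/
def apt (Λ : ℝ) (j : HIndex) : ℝ := lam Λ j.n

lemma specMeasure_eq (Λ : ℝ) (φ : Hspace) :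
    specMeasure Λ φ = Measure.sum (fun i : HIndex => wco φ i • Measure.dirac (apt Λ i)) := rfl

/-- Any finite set of reals has a positive separation threshold. -/
lemma exists_gap (V : Finset ℝ) :
    ∃ ε₀ > (0 : ℝ), ∀ a ∈ V, ∀ b ∈ V, |a - b| < ε₀ → a = b := by
  classical
  set D : Finset ℝ := ((V ×ˢ V).filter fun p => p.1 ≠ p.2).image fun p => |p.1 - p.2| with hD
  have hmemD : ∀ a ∈ V, ∀ b ∈ V, a ≠ b → |a - b| ∈ D := by
    intro a ha b hb hab
    exact Finset.mem_image.2 ⟨(a, b),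
      Finset.mem_filter.2 ⟨Finset.mem_product.2 ⟨ha, hb⟩, hab⟩, rfl⟩
  rcases D.eq_empty_or_nonempty with h | h
  · refine ⟨1, one_pos, fun a ha b hb _ => ?_⟩
    by_contra hab
    have := hmemD a ha b hb hab
    simp [h] at this
  · refine ⟨D.min' h, ?_, ?_⟩
    · obtain ⟨p, hp, hpe⟩ := Finset.mem_image.1 (D.min'_mem h)
      obtain ⟨_, hp2⟩ := Finset.mem_filter.1 hp
      rw [← hpe]
      exact abs_sub_pos.2 hp2
    · intro a ha b hb hlt
      by_contra hab
      exact absurd (D.min'_le _ (hmemD a ha b hb hab)) (not_le.2 hlt)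

lemma specMeasure_apply (Λ : ℝ) (φ : Hspace) {E : Set ℝ} (hE : MeasurableSet E) :
    specMeasure Λ φ E = ∑' j : HIndex, wco φ j * E.indicator 1 (apt Λ j) := by
  rw [specMeasure_eq, Measure.sum_apply _ hE]
  refine tsum_congr fun j => ?_
  rw [Measure.smul_apply, Measure.dirac_apply, smul_eq_mul]

lemma specMeasure_Ioo (Λ : ℝ) (φ : Hspace) (ε x : ℝ) :
    specMeasure Λ φ (Ioo (x - ε) (x + ε)) =
      ∑' j : HIndex, wco φ j * (Ioo (apt Λ j - ε) (apt Λ j + ε)).indicator 1 x := by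
  rw [specMeasure_apply Λ φ measurableSet_Ioo]
  refine tsum_congr fun j => ?_
  congr 1
  simp only [indicator_apply, mem_Ioo, Pi.one_apply]
  have : (x - ε < apt Λ j ∧ apt Λ j < x + ε) ↔ (apt Λ j - ε < x ∧ x < apt Λ j + ε) := by
    constructor <;> rintro ⟨h1, h2⟩ <;> constructor <;> linarith
  exact if_congr this rfl rfl

lemma measurable_specMeasure_Ioo (Λ : ℝ) (φ : Hspace) (ε : ℝ) :
    Measurable fun x : ℝ => specMeasure Λ φ (Ioo (x - ε) (x + ε)) := by
  have h : (fun x : ℝ => specMeasure Λ φ (Ioo (x - ε) (x + ε))) =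
      fun x => ∑' j : HIndex, wco φ j * (Ioo (apt Λ j - ε) (apt Λ j + ε)).indicator 1 x :=
    funext fun x => specMeasure_Ioo Λ φ ε x
  rw [h]
  exact Measurable.ennreal_tsum fun j =>
    (measurable_one.indicator measurableSet_Ioo).const_mul _

lemma fracIntegral_specMeasure (Λ : ℝ) (φ : Hspace) (q ε : ℝ) :
    fracIntegral (specMeasure Λ φ) q ε =
      ∑' j : HIndex, wco φ j *
        (if 0 < specMeasure Λ φ (Ioo (apt Λ j - ε) (apt Λ j + ε)) then
          specMeasure Λ φ (Ioo (apt Λ j - ε) (apt Λ j + ε)) ^ (q - 1) else 0) := by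
  classical
  have hSmeas : MeasurableSet {x : ℝ | 0 < specMeasure Λ φ (Ioo (x - ε) (x + ε))} :=
    measurableSet_lt measurable_const (measurable_specMeasure_Ioo Λ φ ε)
  rw [fracIntegral]
  simp only [specMeasure_eq Λ φ] at hSmeas ⊢
  rw [Measure.restrict_sum _ hSmeas, lintegral_sum_measure]
  refine tsum_congr fun j => ?_
  rw [Measure.restrict_smul, lintegral_smul_measure, setLIntegral_dirac]
  simp only [mem_setOf_eq, smul_eq_mul]
  congr 1

/-- Key lemma: for finitely supported `φ`, the fractal integral is constant for small `ε`. -/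
lemma fracIntegral_const (Λ : ℝ) (φ : Hspace) (t : Finset HIndex)
    (hsupp : ∀ j : HIndex, φ j ≠ 0 → j ∈ t) (q : ℝ) :
    ∃ ε₀ > (0 : ℝ), ∀ ε, 0 < ε → ε < ε₀ → ∀ ε', 0 < ε' → ε' < ε₀ →
      fracIntegral (specMeasure Λ φ) q ε = fracIntegral (specMeasure Λ φ) q ε' := by
  classical
  have hw0 : ∀ j : HIndex, wco φ j ≠ 0 → j ∈ t := by
    intro j h
    refine hsupp j fun h0 => h ?_
    simp [wco, h0]
  obtain ⟨ε₀, hε₀, hgap⟩ := exists_gap (t.image fun j => apt Λ j)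
  refine ⟨ε₀, hε₀, fun ε hε hεlt ε' hε' hε'lt => ?_⟩
  rw [fracIntegral_specMeasure, fracIntegral_specMeasure]
  refine tsum_congr fun j => ?_
  by_cases hwj : wco φ j = 0
  · simp [hwj]
  · have hj : j ∈ t := hw0 j hwj
    have hval : ∀ {e : ℝ}, 0 < e → e < ε₀ →
        specMeasure Λ φ (Ioo (apt Λ j - e) (apt Λ j + e)) =
          ∑' k : HIndex, wco φ k * (if apt Λ k = apt Λ j then 1 else 0) := by
      intro e he helt
      rw [specMeasure_Ioo]
      refine tsum_congr fun k => ?_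
      by_cases hwk : wco φ k = 0
      · simp [hwk]
      · have hk : k ∈ t := hw0 k hwk
        congr 1
        simp only [indicator_apply, mem_Ioo, Pi.one_apply]
        refine if_congr ?_ rfl rfl
        constructor
        · rintro ⟨h1, h2⟩
          exact hgap _ (Finset.mem_image_of_mem _ hk) _ (Finset.mem_image_of_mem _ hj)
            (by rw [abs_sub_lt_iff]; constructor <;> linarith)
        · intro h
          rw [h]
          constructor <;> linarith
    rw [hval hε hεlt, hval hε' hε'lt]

lemma dlower_zero (Λ : ℝ) (φ : Hspace) (t : Finset HIndex)
    (hsupp : ∀ j : HIndex, φ j ≠ 0 → j ∈ t) {q : ℝ} (hq : q ∈ Ioo (0 : ℝ) 1) :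
    Dlower (specMeasure Λ φ) q = 0 := by
  obtain ⟨ε₀, hε₀, hconst⟩ := fracIntegral_const Λ φ t hsupp q
  set c := Real.log (fracIntegral (specMeasure Λ φ) q (ε₀ / 2)).toReal with hc
  have h2 : Tendsto (fun ε : ℝ => (q - 1) * Real.log ε) (𝓝[>] 0) atTop :=
    (tendsto_const_mul_atTop_of_neg (by linarith [hq.2])).2
      Real.tendsto_log_nhdsGT_zero
  have h3 : Tendsto (fun ε : ℝ => c / ((q - 1) * Real.log ε)) (𝓝[>] 0) (𝓝 0) :=
    tendsto_const_nhds.div_atTop h2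
  have heq : (fun ε : ℝ =>
      Real.log (fracIntegral (specMeasure Λ φ) q ε).toReal / ((q - 1) * Real.log ε))
      =ᶠ[𝓝[>] (0 : ℝ)] fun ε => c / ((q - 1) * Real.log ε) := by
    filter_upwards [Ioo_mem_nhdsGT_of_mem (⟨le_refl (0 : ℝ), hε₀⟩ : (0 : ℝ) ∈ Ico 0 ε₀)]
      with ε hε
    rw [hconst ε hε.1 hε.2 (ε₀ / 2) (by linarith) (by linarith)]
  have h4 : Tendsto (fun ε : ℝ =>
      Real.log (fracIntegral (specMeasure Λ φ) q ε).toReal / ((q - 1) * Real.log ε))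
      (𝓝[>] (0 : ℝ)) (𝓝 0) := h3.congr' heq.symm
  exact h4.liminf_eq

theorem dense_lower_dimension_zero (Λ : ℝ) (hΛ : 0 < Λ) :
    (∀ ψ : Hspace, ∀ δ > (0 : ℝ), ∃ φ : Hspace,
        ‖ψ - φ‖ < δ ∧ ∀ q ∈ Ioo (0 : ℝ) 1, Dlower (specMeasure Λ φ) q = 0) ∧
      ∀ q ∈ Ioo (0 : ℝ) 1,
        Dense {ψ : Hspace | Dlower (specMeasure Λ ψ) q = 0} := by
  classical
  have main : ∀ ψ : Hspace, ∀ δ > (0 : ℝ), ∃ φ : Hspace,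
      ‖ψ - φ‖ < δ ∧ ∀ q ∈ Ioo (0 : ℝ) 1, Dlower (specMeasure Λ φ) q = 0 := by
    intro ψ δ hδ
    have hsum := lp.hasSum_single (by norm_num : (2 : ℝ≥0∞) ≠ ⊤) ψ
    have hev : ∀ᶠ s : Finset HIndex in atTop,
        dist (∑ i ∈ s, lp.single 2 i (ψ i)) ψ < δ :=
      Metric.tendsto_nhds.mp hsum δ hδ
    obtain ⟨t, ht⟩ := hev.exists
    set φ : Hspace := ∑ i ∈ t, lp.single 2 i (ψ i) with hφ
    have hsupp : ∀ j : HIndex, φ j ≠ 0 → j ∈ t := by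
      intro j hj
      by_contra hjt
      apply hj
      have h1 : φ j = ∑ i ∈ t, lp.single 2 i (ψ i) j := by
        rw [hφ, lp.coeFn_sum]
        exact Finset.sum_apply j t _
      rw [h1]
      exact Finset.sum_eq_zero fun i hi =>
        lp.single_apply_ne 2 i _ (fun h => hjt (h ▸ hi))
    refine ⟨φ, ?_, fun q hq => dlower_zero Λ φ t hsupp hq⟩
    rw [← dist_eq_norm, dist_comm]
    exact ht
  refine ⟨main, fun q hq => ?_⟩
  rw [Metric.dense_iff]
  intro ψ r hr
  obtain ⟨φ, hφ1, hφ2⟩ := main ψ r hr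
  refine ⟨φ, ?_, hφ2 q hq⟩
  rw [Metric.mem_ball, dist_eq_norm, ← norm_sub_rev]
  exact hφ1
end
end

section
/- Let Λ > 0, λ_n = −Λ/n², let (c_n)_{n≥1} be nonnegative reals with Σ_{n≥1} c_n = 1, and set μ = Σ_{n≥1} c_n δ_{λ_n}. Then for every r ∈ (0,1) there exist constants C > 0 and ε₀ > 0 such that for all ε ∈ (0, ε₀): (1/ε) ∫_ℝ μ((x−ε, x+ε))^r dx ≤ C ε^{−1/3}. -/
open MeasureTheory Filter Set Topology ENNReal

noncomputable section

set_option maxHeartbeats 1000000 in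
theorem hydrogen_L_integral_upper_bound
    (Λ : ℝ) (hΛ : 0 < Λ)
    (c : ℕ → ℝ) (hc : ∀ n, 0 ≤ c n) (hsum : ∑' n : ℕ, c (n + 1) = 1)
    (μ : Measure ℝ)
    (hμ : μ = Measure.sum fun n : ℕ =>
      ENNReal.ofReal (c (n + 1)) • Measure.dirac (lam Λ (n + 1)))
    (r : ℝ) (hr : r ∈ Ioo (0 : ℝ) 1) :
    ∃ C > (0 : ℝ), ∃ ε₀ > (0 : ℝ), ∀ ε ∈ Ioo (0 : ℝ) ε₀,
      (ENNReal.ofReal ε)⁻¹ * ∫⁻ x : ℝ, μ (Ioo (x - ε) (x + ε)) ^ r ≤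
        ENNReal.ofReal (C * ε ^ (-(1 / 3) : ℝ)) := by
  obtain ⟨hr0, hr1⟩ := hr
  refine ⟨6 + Λ, by linarith, 1, one_pos, ?_⟩
  rintro ε ⟨hε0, hε1⟩
  set a : ℝ := ε ^ (-(1 / 3) : ℝ) with ha
  have hapos : 0 < a := Real.rpow_pos_of_pos hε0 _
  have ha1 : 1 ≤ a :=
    Real.one_le_rpow_of_pos_of_le_one_of_nonpos hε0 hε1.le (by norm_num)
  set N : ℕ := ⌈a⌉₊ with hN
  have haN : a ≤ (N : ℝ) := Nat.le_ceil a
  have hNa : (N : ℝ) ≤ 2 * a := by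
    have h := Nat.ceil_lt_add_one hapos.le
    rw [← hN] at h
    linarith
  have ha3 : a ^ 3 * ε = 1 := by
    have : a ^ 3 = ε ^ (-1 : ℝ) := by
      rw [ha, ← Real.rpow_natCast (ε ^ (-(1 / 3) : ℝ)) 3, ← Real.rpow_mul hε0.le]
      norm_num
    rw [this, Real.rpow_neg_one]
    exact inv_mul_cancel₀ hε0.ne'
  -- the two covering sets
  set U : Set ℝ := ⋃ n ∈ Finset.range N, Ioo (lam Λ (n + 1) - ε) (lam Λ (n + 1) + ε) with hU
  set V : Set ℝ := Ioo (-(Λ / ((N : ℝ) + 1) ^ 2) - ε) ε with hV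
  have hUm : MeasurableSet U := (Finset.range N).measurableSet_biUnion
    (fun n _ => measurableSet_Ioo)
  have hVm : MeasurableSet V := measurableSet_Ioo
  -- the measure of an interval
  have hμapp : ∀ x : ℝ, μ (Ioo (x - ε) (x + ε)) =
      ∑' n : ℕ, ENNReal.ofReal (c (n + 1)) *
        (Ioo (x - ε) (x + ε)).indicator 1 (lam Λ (n + 1)) := by
    intro x
    rw [hμ, Measure.sum_apply _ measurableSet_Ioo]
    exact tsum_congr fun n => by
      rw [Measure.smul_apply, Measure.dirac_apply' _ measurableSet_Ioo, smul_eq_mul]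
  have hsummable : Summable (fun n => c (n + 1)) := by
    by_contra h
    rw [tsum_eq_zero_of_not_summable h] at hsum
    norm_num at hsum
  have htot : ∑' n : ℕ, ENNReal.ofReal (c (n + 1)) = 1 := by
    rw [← ENNReal.ofReal_tsum_of_nonneg (fun n => hc _) hsummable, hsum, ENNReal.ofReal_one]
  -- pointwise bound
  have hpt : ∀ x : ℝ, μ (Ioo (x - ε) (x + ε)) ^ r ≤
      U.indicator 1 x + V.indicator 1 x := by
    intro x
    rw [hμapp x]
    set g : ℕ → ℝ≥0∞ := fun n => ENNReal.ofReal (c (n + 1)) *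
      (Ioo (x - ε) (x + ε)).indicator 1 (lam Λ (n + 1)) with hg
    have hgle : ∀ n : ℕ, g n ≤ ENNReal.ofReal (c (n + 1)) := by
      intro n
      rw [hg]
      calc ENNReal.ofReal (c (n + 1)) * (Ioo (x - ε) (x + ε)).indicator 1 (lam Λ (n + 1))
          ≤ ENNReal.ofReal (c (n + 1)) * 1 := by
            refine mul_le_mul_right ?_ _
            exact Set.indicator_le_self' (fun _ _ => zero_le_one) _
        _ = ENNReal.ofReal (c (n + 1)) := mul_one _
    have hsplit : ∑' n, g n = (∑ n ∈ Finset.range N, g n) + ∑' n, g (n + N) :=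
      (Summable.sum_add_tsum_nat_add' (f := g) (k := N) ENNReal.summable).symm
    rw [hsplit]
    refine le_trans (ENNReal.rpow_add_le_add_rpow _ _ hr0.le hr1.le) (add_le_add ?_ ?_)
    · by_cases hx : x ∈ U
      · have h1 : ∑ n ∈ Finset.range N, g n ≤ 1 := by
          calc ∑ n ∈ Finset.range N, g n
              ≤ ∑ n ∈ Finset.range N, ENNReal.ofReal (c (n + 1)) :=
                Finset.sum_le_sum fun n _ => hgle n
            _ ≤ ∑' n : ℕ, ENNReal.ofReal (c (n + 1)) := ENNReal.sum_le_tsum _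
            _ = 1 := htot
        calc (∑ n ∈ Finset.range N, g n) ^ r ≤ 1 ^ r :=
              ENNReal.rpow_le_rpow h1 hr0.le
          _ = 1 := ENNReal.one_rpow r
          _ = U.indicator 1 x := (Set.indicator_of_mem hx 1).symm
      · have h0 : ∀ n ∈ Finset.range N, g n = 0 := by
          intro n hn
          have hlam : lam Λ (n + 1) ∉ Ioo (x - ε) (x + ε) := by
            intro hmem
            apply hx
            rw [hU]
            simp only [Set.mem_iUnion]
            exact ⟨n, hn, ⟨by linarith [hmem.1, hmem.2], by linarith [hmem.1, hmem.2]⟩⟩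
          rw [hg]
          simp [Set.indicator_of_notMem hlam]
        rw [Finset.sum_eq_zero h0, ENNReal.zero_rpow_of_pos hr0]
        exact zero_le
    · by_cases hx : x ∈ V
      · have h1 : ∑' n, g (n + N) ≤ 1 := by
          calc ∑' n, g (n + N) ≤ ∑' n : ℕ, ENNReal.ofReal (c (n + N + 1)) :=
              ENNReal.tsum_le_tsum fun n => hgle (n + N)
            _ ≤ (∑ n ∈ Finset.range N, ENNReal.ofReal (c (n + 1))) +
                ∑' n : ℕ, ENNReal.ofReal (c (n + N + 1)) := le_add_self
            _ = ∑' n : ℕ, ENNReal.ofReal (c (n + 1)) :=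
                Summable.sum_add_tsum_nat_add' (f := fun n => ENNReal.ofReal (c (n + 1))) (k := N) ENNReal.summable
            _ = 1 := htot
        calc (∑' n, g (n + N)) ^ r ≤ 1 ^ r := ENNReal.rpow_le_rpow h1 hr0.le
          _ = 1 := ENNReal.one_rpow r
          _ = V.indicator 1 x := (Set.indicator_of_mem hx 1).symm
      · have h0 : ∀ n : ℕ, g (n + N) = 0 := by
          intro n
          have hlam : lam Λ (n + N + 1) ∉ Ioo (x - ε) (x + ε) := by
            intro hmem
            apply hx
            have hk : ((N : ℝ) + 1) ≤ ((n + N + 1 : ℕ) : ℝ) := by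
              push_cast; linarith [Nat.cast_nonneg (α := ℝ) n]
            have hkpos : (0 : ℝ) < ((n + N + 1 : ℕ) : ℝ) := by positivity
            have hub : lam Λ (n + N + 1) < 0 := by
              rw [lam]
              apply div_neg_of_neg_of_pos (by linarith) (by positivity)
            have hlb : -(Λ / ((N : ℝ) + 1) ^ 2) ≤ lam Λ (n + N + 1) := by
              rw [lam, neg_div, neg_le_neg_iff]
              exact div_le_div_of_nonneg_left hΛ.le (by positivity)
                (by nlinarith)
            rw [hV]
            exact ⟨by linarith [hmem.1, hmem.2], by linarith [hmem.1, hmem.2]⟩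
          rw [hg]
          simp [Set.indicator_of_notMem hlam]
        rw [tsum_congr h0, tsum_zero, ENNReal.zero_rpow_of_pos hr0]
        exact zero_le
  -- integrate
  have hInt : (∫⁻ x : ℝ, μ (Ioo (x - ε) (x + ε)) ^ r) ≤ volume U + volume V := by
    calc (∫⁻ x : ℝ, μ (Ioo (x - ε) (x + ε)) ^ r)
        ≤ ∫⁻ x : ℝ, (U.indicator 1 x + V.indicator 1 x) := lintegral_mono hpt
      _ = (∫⁻ x : ℝ, U.indicator 1 x) + ∫⁻ x : ℝ, V.indicator 1 x :=
          lintegral_add_left (measurable_one.indicator hUm) _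
      _ = volume U + volume V := by
          rw [lintegral_indicator_one hUm, lintegral_indicator_one hVm]
  have hvolU : volume U ≤ ENNReal.ofReal ((N : ℝ) * (2 * ε)) := by
    calc volume U ≤ ∑ n ∈ Finset.range N,
          volume (Ioo (lam Λ (n + 1) - ε) (lam Λ (n + 1) + ε)) :=
        measure_biUnion_finset_le _ _
      _ = ∑ _n ∈ Finset.range N, ENNReal.ofReal (2 * ε) := by
          refine Finset.sum_congr rfl fun n _ => ?_
          rw [Real.volume_Ioo]
          congr 1
          ring
      _ = (N : ℝ≥0∞) * ENNReal.ofReal (2 * ε) := by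
          rw [Finset.sum_const, Finset.card_range, nsmul_eq_mul]
      _ = ENNReal.ofReal ((N : ℝ) * (2 * ε)) := by
          rw [← ENNReal.ofReal_natCast N, ← ENNReal.ofReal_mul (Nat.cast_nonneg N)]
  have hvolV : volume V = ENNReal.ofReal (Λ / ((N : ℝ) + 1) ^ 2 + 2 * ε) := by
    rw [hV, Real.volume_Ioo]
    congr 1
    ring
  -- the real-number estimate
  have hreal : (N : ℝ) * (2 * ε) + (Λ / ((N : ℝ) + 1) ^ 2 + 2 * ε) ≤ ε * ((6 + Λ) * a) := by
    have h2 : Λ / ((N : ℝ) + 1) ^ 2 ≤ Λ * (ε * a) := by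
      have hstep : Λ / ((N : ℝ) + 1) ^ 2 ≤ Λ / a ^ 2 :=
        div_le_div_of_nonneg_left hΛ.le (by positivity) (by nlinarith)
      have heq : Λ / a ^ 2 = Λ * (ε * a) := by
        rw [div_eq_iff (by positivity)]
        nlinarith [ha3]
      linarith
    nlinarith [mul_pos hε0 hapos]
  -- put everything together
  calc (ENNReal.ofReal ε)⁻¹ * ∫⁻ x : ℝ, μ (Ioo (x - ε) (x + ε)) ^ r
      ≤ (ENNReal.ofReal ε)⁻¹ * ENNReal.ofReal (ε * ((6 + Λ) * a)) := by
        refine mul_le_mul_right (hInt.trans ?_) _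
        calc volume U + volume V
            ≤ ENNReal.ofReal ((N : ℝ) * (2 * ε)) +
              ENNReal.ofReal (Λ / ((N : ℝ) + 1) ^ 2 + 2 * ε) :=
            add_le_add hvolU hvolV.le
          _ = ENNReal.ofReal ((N : ℝ) * (2 * ε) + (Λ / ((N : ℝ) + 1) ^ 2 + 2 * ε)) :=
            (ENNReal.ofReal_add (by positivity) (by positivity)).symm
          _ ≤ ENNReal.ofReal (ε * ((6 + Λ) * a)) := ENNReal.ofReal_le_ofReal hreal
    _ = ENNReal.ofReal ((6 + Λ) * a) := by
        rw [ENNReal.ofReal_mul hε0.le, ← mul_assoc,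
          ENNReal.inv_mul_cancel (ENNReal.ofReal_pos.2 hε0).ne' ENNReal.ofReal_ne_top,
          one_mul]
end
end

section
/- Let Λ > 0, λ_n = −Λ/n², let (c_n)_{n≥1} be nonnegative reals with Σ_{n≥1} c_n = 1, and set μ = Σ_{n≥1} c_n δ_{λ_n}. Then for every q ∈ (0,1): limsup_{ε↓0} ln( ε^{−1} ∫_ℝ μ((x−ε, x+ε))^q dx ) / ((q−1) ln ε) ≤ 1/(3(1−q)). -/
open MeasureTheory Filter Set Topology ENNReal

noncomputable section

lemma key_bound (Λ : ℝ) (hΛ : 0 < Λ)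
    (c : ℕ → ℝ) (hc : ∀ n, 0 ≤ c n) (hsum : ∑' n : ℕ, c (n + 1) = 1)
    (μ : Measure ℝ)
    (hμ : μ = Measure.sum fun n : ℕ =>
      ENNReal.ofReal (c (n + 1)) • Measure.dirac (lam Λ (n + 1)))
    (q : ℝ) (hq : q ∈ Ioo (0 : ℝ) 1)
    (ε : ℝ) (hε : 0 < ε) (hε1 : ε < 1) :
    ∫⁻ x : ℝ, μ (Ioo (x - ε) (x + ε)) ^ q ≤
      ENNReal.ofReal ((2 * Real.sqrt Λ + 5) * ε ^ ((2:ℝ)/3)) := by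
  set N : ℕ := ⌈Real.sqrt Λ * ε ^ (-(1:ℝ)/3)⌉₊ with hN
  set δ : ℝ := ε + ε ^ ((2:ℝ)/3) with hδ
  have hεpow : 0 < ε ^ ((2:ℝ)/3) := Real.rpow_pos_of_pos hε _
  have hεpow' : 0 < ε ^ (-(1:ℝ)/3) := Real.rpow_pos_of_pos hε _
  have hsummable : Summable (fun n => c (n + 1)) := by
    by_contra h
    rw [tsum_eq_zero_of_not_summable h] at hsum
    norm_num at hsum
  have hμ_apply : ∀ s : Set ℝ, MeasurableSet s →
      μ s = ∑' n : ℕ, ENNReal.ofReal (c (n + 1)) * s.indicator 1 (lam Λ (n + 1)) := by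
    intro s hs
    rw [hμ, Measure.sum_apply _ hs]
    simp only [Measure.smul_apply, smul_eq_mul, Measure.dirac_apply' _ hs]
  have hμ_univ : μ univ = 1 := by
    rw [hμ_apply _ MeasurableSet.univ]
    simp only [indicator_univ, Pi.one_apply, mul_one]
    rw [← ENNReal.ofReal_tsum_of_nonneg (fun n => hc _) hsummable, hsum, ENNReal.ofReal_one]
  have hμ_le_one : ∀ s : Set ℝ, μ s ≤ 1 :=
    fun s => (measure_mono (subset_univ s)).trans_eq hμ_univ
  have hlamneg : ∀ n : ℕ, lam Λ (n + 1) < 0 := by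
    intro n
    have h : (0:ℝ) < ((n:ℝ) + 1) ^ 2 := by positivity
    have : lam Λ (n + 1) = -(Λ / ((n:ℝ) + 1) ^ 2) := by
      simp only [lam]; push_cast; ring
    rw [this]
    exact neg_lt_zero.mpr (by positivity)
  -- pointwise bound
  have pointwise : ∀ x : ℝ, μ (Ioo (x - ε) (x + ε)) ^ q ≤
      (Ioo (-δ) ε).indicator (1 : ℝ → ℝ≥0∞) x +
        ∑ n ∈ Finset.range N,
          (Ioo (lam Λ (n + 1) - ε) (lam Λ (n + 1) + ε)).indicator (1 : ℝ → ℝ≥0∞) x := by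
    intro x
    by_cases hx : ∃ n : ℕ, lam Λ (n + 1) ∈ Ioo (x - ε) (x + ε)
    · obtain ⟨n, hn⟩ := hx
      have h1 : μ (Ioo (x - ε) (x + ε)) ^ q ≤ 1 := by
        calc μ (Ioo (x - ε) (x + ε)) ^ q ≤ 1 ^ q :=
              ENNReal.rpow_le_rpow (hμ_le_one _) hq.1.le
          _ = 1 := ENNReal.one_rpow q
      refine h1.trans ?_
      rcases le_or_gt x (-δ) with hxd | hxd
      · -- far case
        have hlam' : lam Λ (n + 1) = -(Λ / ((n:ℝ) + 1) ^ 2) := by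
          simp only [lam]; push_cast; ring
        have hna : lam Λ (n + 1) < -(ε ^ ((2:ℝ)/3)) := by
          have h2 := hn.2
          have h3 : x + ε ≤ -(ε ^ ((2:ℝ)/3)) := by rw [hδ] at hxd; linarith
          linarith
        have hp2 : (0:ℝ) < ((n:ℝ) + 1) ^ 2 := by positivity
        have h2 : ε ^ ((2:ℝ)/3) < Λ / ((n:ℝ) + 1) ^ 2 := by
          rw [hlam'] at hna; linarith
        have h3 : ((n:ℝ) + 1) ^ 2 * ε ^ ((2:ℝ)/3) < Λ := by
          rw [lt_div_iff₀ hp2] at h2; linarith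
        have h4 : (ε ^ (-(1:ℝ)/3)) ^ 2 = (ε ^ ((2:ℝ)/3))⁻¹ := by
          rw [← Real.rpow_natCast (ε ^ (-(1:ℝ)/3)) 2, ← Real.rpow_mul hε.le,
            ← Real.rpow_neg hε.le]
          norm_num
        have h5 : (Real.sqrt Λ * ε ^ (-(1:ℝ)/3)) ^ 2 = Λ / ε ^ ((2:ℝ)/3) := by
          rw [mul_pow, Real.sq_sqrt hΛ.le, h4]; ring
        have h6 : ((n:ℝ) + 1) ^ 2 < (Real.sqrt Λ * ε ^ (-(1:ℝ)/3)) ^ 2 := by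
          rw [h5, lt_div_iff₀ hεpow]; exact h3
        have h7 : (n:ℝ) + 1 < Real.sqrt Λ * ε ^ (-(1:ℝ)/3) :=
          lt_of_pow_lt_pow_left₀ 2 (by positivity) h6
        have hnN : n < N := by
          have h8 : ((n:ℝ)) + 1 < (N:ℝ) := h7.trans_le (Nat.le_ceil _)
          have h9 : ((n + 1 : ℕ) : ℝ) < (N:ℝ) := by push_cast; linarith
          have := Nat.cast_lt.mp h9
          omega
        have hmem : x ∈ Ioo (lam Λ (n + 1) - ε) (lam Λ (n + 1) + ε) :=
          ⟨by linarith [hn.2], by linarith [hn.1]⟩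
        have hsum1 : (1:ℝ≥0∞) ≤ ∑ m ∈ Finset.range N,
            (Ioo (lam Λ (m + 1) - ε) (lam Λ (m + 1) + ε)).indicator (1 : ℝ → ℝ≥0∞) x := by
          have h9 := Finset.single_le_sum
            (f := fun m => (Ioo (lam Λ (m + 1) - ε) (lam Λ (m + 1) + ε)).indicator
              (1 : ℝ → ℝ≥0∞) x)
            (fun i _ => zero_le) (Finset.mem_range.2 hnN)
          simpa [indicator_of_mem hmem] using h9
        exact hsum1.trans (self_le_add_left _ _)
      · -- near case
        have hx2 : x < ε := by
          have h2 := hn.1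
          have h3 := hlamneg n
          linarith
        have hmem : x ∈ Ioo (-δ) ε := ⟨hxd, hx2⟩
        rw [indicator_of_mem hmem]
        exact le_add_right le_rfl
    · push_neg at hx
      have hz : μ (Ioo (x - ε) (x + ε)) = 0 := by
        rw [hμ_apply _ measurableSet_Ioo]
        have h : ∀ n : ℕ, ENNReal.ofReal (c (n + 1)) *
            (Ioo (x - ε) (x + ε)).indicator 1 (lam Λ (n + 1)) = 0 := by
          intro n
          rw [indicator_of_notMem (hx n), mul_zero]
        simp only [h, tsum_zero]
      rw [hz, ENNReal.zero_rpow_of_pos hq.1]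
      exact zero_le
  calc ∫⁻ x : ℝ, μ (Ioo (x - ε) (x + ε)) ^ q
      ≤ ∫⁻ x : ℝ, ((Ioo (-δ) ε).indicator (1 : ℝ → ℝ≥0∞) x +
          ∑ n ∈ Finset.range N,
            (Ioo (lam Λ (n + 1) - ε) (lam Λ (n + 1) + ε)).indicator (1 : ℝ → ℝ≥0∞) x) :=
        lintegral_mono pointwise
    _ = volume (Ioo (-δ) ε) + ∑ n ∈ Finset.range N,
          volume (Ioo (lam Λ (n + 1) - ε) (lam Λ (n + 1) + ε)) := by
        rw [lintegral_add_left (measurable_one.indicator measurableSet_Ioo),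
          lintegral_indicator_one measurableSet_Ioo,
          lintegral_finset_sum _ (fun n _ => measurable_one.indicator measurableSet_Ioo)]
        congr 1
        exact Finset.sum_congr rfl fun n _ => lintegral_indicator_one measurableSet_Ioo
    _ = ENNReal.ofReal (ε + δ) + ∑ n ∈ Finset.range N, ENNReal.ofReal (2 * ε) := by
        rw [Real.volume_Ioo]
        congr 1
        · congr 1; ring
        · refine Finset.sum_congr rfl fun n _ => ?_
          rw [Real.volume_Ioo]
          congr 1; ring
    _ = ENNReal.ofReal (ε + δ) + (N : ℝ≥0∞) * ENNReal.ofReal (2 * ε) := by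
        rw [Finset.sum_const, Finset.card_range, nsmul_eq_mul]
    _ ≤ ENNReal.ofReal ((2 * Real.sqrt Λ + 5) * ε ^ ((2:ℝ)/3)) := by
        rw [← ENNReal.ofReal_natCast N, ← ENNReal.ofReal_mul (Nat.cast_nonneg N),
          ← ENNReal.ofReal_add (by positivity) (by positivity)]
        apply ENNReal.ofReal_le_ofReal
        have hNle : (N:ℝ) ≤ Real.sqrt Λ * ε ^ (-(1:ℝ)/3) + 1 :=
          (Nat.ceil_lt_add_one (by positivity)).le
        have hmul : ε ^ (-(1:ℝ)/3) * ε = ε ^ ((2:ℝ)/3) := by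
          rw [show ((2:ℝ)/3) = -(1:ℝ)/3 + 1 by norm_num, Real.rpow_add hε, Real.rpow_one]
        have hεle : ε ≤ ε ^ ((2:ℝ)/3) := by
          have := Real.rpow_le_rpow_of_exponent_ge hε hε1.le
            (by norm_num : (2:ℝ)/3 ≤ (1:ℝ))
          simpa using this
        have hbound : (N:ℝ) * (2 * ε) ≤ (Real.sqrt Λ * ε ^ (-(1:ℝ)/3) + 1) * (2 * ε) :=
          mul_le_mul_of_nonneg_right hNle (by positivity)
        have hexp : (Real.sqrt Λ * ε ^ (-(1:ℝ)/3) + 1) * (2 * ε)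
            = 2 * Real.sqrt Λ * ε ^ ((2:ℝ)/3) + 2 * ε := by
          rw [← hmul]; ring
        rw [hexp] at hbound
        have hs : (0:ℝ) ≤ Real.sqrt Λ := Real.sqrt_nonneg Λ
        rw [hδ]
        nlinarith [hεle, hε.le]

theorem hydrogen_upper_dimension_alt_formula_bound
    (Λ : ℝ) (hΛ : 0 < Λ)
    (c : ℕ → ℝ) (hc : ∀ n, 0 ≤ c n) (hsum : ∑' n : ℕ, c (n + 1) = 1)
    (μ : Measure ℝ)
    (hμ : μ = Measure.sum fun n : ℕ =>
      ENNReal.ofReal (c (n + 1)) • Measure.dirac (lam Λ (n + 1)))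
    (q : ℝ) (hq : q ∈ Ioo (0 : ℝ) 1) :
    limsup (fun ε : ℝ =>
        Real.log ((ENNReal.ofReal ε)⁻¹ * ∫⁻ x : ℝ, μ (Ioo (x - ε) (x + ε)) ^ q).toReal /
          ((q - 1) * Real.log ε)) (𝓝[>] 0) ≤ 1 / (3 * (1 - q)) := by
  have hq0 := hq.1
  have hq1 := hq.2
  have h1q : (0:ℝ) < 1 - q := by linarith
  have hs : (0:ℝ) ≤ Real.sqrt Λ := Real.sqrt_nonneg Λ
  set C : ℝ := 2 * Real.sqrt Λ + 5 with hC
  have hC1 : (1:ℝ) ≤ C := by rw [hC]; linarith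
  set L : ℝ := 1 / (3 * (1 - q)) with hL
  have hLpos : 0 < L := by rw [hL]; positivity
  set f : ℝ → ℝ := fun ε : ℝ =>
      Real.log ((ENNReal.ofReal ε)⁻¹ * ∫⁻ x : ℝ, μ (Ioo (x - ε) (x + ε)) ^ q).toReal /
        ((q - 1) * Real.log ε) with hf
  set g : ℝ → ℝ := fun ε : ℝ => Real.log C / ((1 - q) * (-Real.log ε)) + L with hg
  have hfg : ∀ᶠ ε in 𝓝[>] (0:ℝ), f ε ≤ g ε := by
    filter_upwards [Ioo_mem_nhdsGT_of_mem
      (show (0:ℝ) ∈ Ico (0:ℝ) 1 by constructor <;> norm_num)] with ε hmem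
    obtain ⟨hε0, hε1⟩ := hmem
    have hlogneg : Real.log ε < 0 := Real.log_neg hε0 hε1
    have hlne : Real.log ε ≠ 0 := ne_of_lt hlogneg
    have hT : (ENNReal.ofReal ε)⁻¹ * ∫⁻ x : ℝ, μ (Ioo (x - ε) (x + ε)) ^ q ≤
        ENNReal.ofReal (C * ε ^ (-(1:ℝ)/3)) := by
      calc (ENNReal.ofReal ε)⁻¹ * ∫⁻ x : ℝ, μ (Ioo (x - ε) (x + ε)) ^ q
          ≤ (ENNReal.ofReal ε)⁻¹ * ENNReal.ofReal (C * ε ^ ((2:ℝ)/3)) :=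
            mul_le_mul_right (key_bound Λ hΛ c hc hsum μ hμ q hq ε hε0 hε1) _
        _ = ENNReal.ofReal ε⁻¹ * ENNReal.ofReal (C * ε ^ ((2:ℝ)/3)) := by
            rw [ENNReal.ofReal_inv_of_pos hε0]
        _ = ENNReal.ofReal (ε⁻¹ * (C * ε ^ ((2:ℝ)/3))) :=
            (ENNReal.ofReal_mul (by positivity)).symm
        _ = ENNReal.ofReal (C * ε ^ (-(1:ℝ)/3)) := by
            congr 1
            rw [show ε⁻¹ = ε ^ (-(1:ℝ)) from (Real.rpow_neg_one ε).symm,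
              show (-(1:ℝ)/3) = -1 + (2:ℝ)/3 by norm_num, Real.rpow_add hε0]
            ring
    have hrpos : (0:ℝ) < C * ε ^ (-(1:ℝ)/3) := by
      have : (0:ℝ) < C := by linarith
      positivity
    have hTr : ((ENNReal.ofReal ε)⁻¹ * ∫⁻ x : ℝ, μ (Ioo (x - ε) (x + ε)) ^ q).toReal ≤
        C * ε ^ (-(1:ℝ)/3) := ENNReal.toReal_le_of_le_ofReal hrpos.le hT
    have hR1 : (1:ℝ) ≤ C * ε ^ (-(1:ℝ)/3) := by
      have h1 : (1:ℝ) ≤ ε ^ (-(1:ℝ)/3) := by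
        have h2 := Real.rpow_le_rpow_of_exponent_ge hε0 hε1.le
          (show -(1:ℝ)/3 ≤ 0 by norm_num)
        simpa using h2
      nlinarith
    have hlogT : Real.log ((ENNReal.ofReal ε)⁻¹ *
          ∫⁻ x : ℝ, μ (Ioo (x - ε) (x + ε)) ^ q).toReal ≤
        Real.log C + (-(1:ℝ)/3) * Real.log ε := by
      have h2 : Real.log ((ENNReal.ofReal ε)⁻¹ *
            ∫⁻ x : ℝ, μ (Ioo (x - ε) (x + ε)) ^ q).toReal ≤
          Real.log (C * ε ^ (-(1:ℝ)/3)) := by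
        rcases eq_or_lt_of_le (ENNReal.toReal_nonneg
          (a := (ENNReal.ofReal ε)⁻¹ * ∫⁻ x : ℝ, μ (Ioo (x - ε) (x + ε)) ^ q)) with h | h
        · rw [← h, Real.log_zero]
          exact Real.log_nonneg hR1
        · exact Real.log_le_log h hTr
      rwa [Real.log_mul (by linarith) (by positivity), Real.log_rpow hε0] at h2
    have hD : 0 < (q - 1) * Real.log ε := mul_pos_of_neg_of_neg (by linarith) hlogneg
    have step : f ε ≤ (Real.log C + (-(1:ℝ)/3) * Real.log ε) / ((q - 1) * Real.log ε) := by
      rw [hf]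
      exact div_le_div_of_nonneg_right hlogT hD.le
    refine step.trans (le_of_eq ?_)
    rw [hg, hL]
    have hq1' : (1:ℝ) - q ≠ 0 := ne_of_gt h1q
    have hq1'' : q - 1 ≠ 0 := (by linarith : q - 1 < 0).ne
    field_simp
    ring
  have hgL : Tendsto g (𝓝[>] (0:ℝ)) (𝓝 L) := by
    have h1 : Tendsto (fun ε : ℝ => -Real.log ε) (𝓝[>] (0:ℝ)) atTop :=
      tendsto_neg_atBot_atTop.comp Real.tendsto_log_nhdsGT_zero
    have h2 : Tendsto (fun ε : ℝ => (1 - q) * (-Real.log ε)) (𝓝[>] (0:ℝ)) atTop :=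
      Filter.Tendsto.const_mul_atTop h1q h1
    have h3 : Tendsto (fun ε : ℝ => Real.log C / ((1 - q) * (-Real.log ε)))
        (𝓝[>] (0:ℝ)) (𝓝 0) := Filter.Tendsto.div_atTop tendsto_const_nhds h2
    have h4 := h3.add (tendsto_const_nhds (x := L) (f := 𝓝[>] (0:ℝ)))
    rw [zero_add] at h4
    exact h4
  have hev : ∀ a : ℝ, L < a → ∀ᶠ ε in 𝓝[>] (0:ℝ), f ε ≤ a := by
    intro a ha
    filter_upwards [hfg, hgL.eventually_lt_const ha] with ε hfe hge
    linarith
  rw [Filter.limsup_eq]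
  by_cases hbdd : BddBelow {a : ℝ | ∀ᶠ ε in 𝓝[>] (0:ℝ), f ε ≤ a}
  · exact le_of_forall_gt_imp_ge_of_dense fun a ha => csInf_le hbdd (hev a ha)
  · rw [Real.sInf_of_not_bddBelow hbdd]
    exact hLpos.le
end
end

section
/- Fix Λ > 0, λ_n = −Λ/n², j ∈ ℕ, and q ∈ (0,1) with j > q/(1−q). Let μ_j = Σ_{n≥1} n^{−(1+1/j)} δ_{λ_n} and, for N ∈ ℕ, set ε_N = (λ_{N+1} − λ_N)/2. Then for every N ≥ 1: I_{μ_j}(q, ε_N) ≥ Σ_{n=1}^N n^{−(1+1/j)q} ≥ ( N^{1−(1+1/j)q} − 1 ) / ( 1 − (1+1/j)q ). -/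
open MeasureTheory Filter Set Topology ENNReal

noncomputable section

theorem hydrogen_fracIntegral_lower_bound_at_gap_scale
    (Λ : ℝ) (hΛ : 0 < Λ) (j : ℕ) (q : ℝ) (hq : q ∈ Ioo (0 : ℝ) 1)
    (hj : q / (1 - q) < (j : ℝ))
    (μj : Measure ℝ)
    (hμ : μj = Measure.sum fun n : ℕ =>
      ENNReal.ofReal (((n + 1 : ℕ) : ℝ) ^ (-(1 + 1 / (j : ℝ)))) •
        Measure.dirac (lam Λ (n + 1)))
    (N : ℕ) (hN : 1 ≤ N) (εN : ℝ) (hεN : εN = (lam Λ (N + 1) - lam Λ N) / 2) :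
    ENNReal.ofReal (∑ n ∈ Finset.Icc 1 N, ((n : ℝ) ^ (-(1 + 1 / (j : ℝ)) * q))) ≤
        fracIntegral μj q εN ∧
      ((N : ℝ) ^ (1 - (1 + 1 / (j : ℝ)) * q) - 1) / (1 - (1 + 1 / (j : ℝ)) * q) ≤
        ∑ n ∈ Finset.Icc 1 N, ((n : ℝ) ^ (-(1 + 1 / (j : ℝ)) * q)) := by
    classical
  obtain ⟨hq0, hq1⟩ := hq
  have h1q : 0 < 1 - q := by linarith
  have hjpos : 0 < (j : ℝ) := lt_of_le_of_lt (by positivity) hj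
  set α : ℝ := 1 + 1 / (j : ℝ) with hα
  have hαpos : 0 < α := by positivity
  have hq' : q < (j : ℝ) * (1 - q) := (div_lt_iff₀ h1q).mp hj
  have hs1 : α * q < 1 := by
    rw [← sub_pos]
    have h : 1 - α * q = ((j : ℝ) * (1 - q) - q) / j := by
      rw [hα]; field_simp; ring
    rw [h]
    exact div_pos (by linarith) hjpos
  have hs0 : 0 < α * q := by positivity
  -- strict monotonicity of lam
  have lam_lt : ∀ a b : ℕ, 1 ≤ a → a < b → lam Λ a < lam Λ b := by
    intro a b ha hab
    unfold lam
    rw [neg_div, neg_div, neg_lt_neg_iff]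
    have hA : (0:ℝ) < (a:ℝ)^2 := by
      have : (0:ℝ) < (a:ℝ) := by exact_mod_cast ha
      positivity
    have hsq : ((a:ℝ))^2 < ((b:ℝ))^2 := by
      have h1 : (a:ℝ) < (b:ℝ) := by exact_mod_cast hab
      have : (0:ℝ) ≤ (a:ℝ) := Nat.cast_nonneg a
      nlinarith
    exact div_lt_div_of_pos_left hΛ hA hsq
  -- gap monotonicity
  have gap_step : ∀ k : ℕ, 1 ≤ k →
      lam Λ (k + 2) - lam Λ (k + 1) ≤ lam Λ (k + 1) - lam Λ k := by
    intro k hk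
    unfold lam
    set x : ℝ := (k : ℝ) with hx
    have hx1 : 1 ≤ x := by rw [hx]; exact_mod_cast hk
    have hc1 : ((k + 1 : ℕ) : ℝ) = x + 1 := by push_cast; ring
    have hc2 : ((k + 2 : ℕ) : ℝ) = x + 2 := by push_cast; ring
    rw [hc1, hc2]
    have key : Λ/(x+1)^2 - Λ/(x+2)^2 ≤ Λ/x^2 - Λ/(x+1)^2 := by
      rw [div_sub_div _ _ (by positivity : (x+1)^2 ≠ 0) (by positivity : (x+2)^2 ≠ 0),
          div_sub_div _ _ (by positivity : x^2 ≠ 0) (by positivity : (x+1)^2 ≠ 0),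
          div_le_div_iff₀ (by positivity) (by positivity)]
      nlinarith [sq_nonneg x, sq_nonneg (x+1), sq_nonneg (x*(x+1)), sq_nonneg (x*(x+2))]
    simp only [neg_div]
    linarith
  have gap_anti : ∀ a b : ℕ, 1 ≤ a → a ≤ b →
      lam Λ (b + 1) - lam Λ b ≤ lam Λ (a + 1) - lam Λ a := by
    intro a b ha hab
    induction b, hab using Nat.le_induction with
    | base => exact le_refl _
    | succ b hb ih =>
        have h1 : 1 ≤ b := le_trans ha hb
        calc lam Λ (b + 1 + 1) - lam Λ (b + 1) ≤ lam Λ (b + 1) - lam Λ b := gap_step b h1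
          _ ≤ lam Λ (a + 1) - lam Λ a := ih
  have hεpos : 0 < εN := by
    rw [hεN]
    have := lam_lt N (N + 1) hN (by omega)
    linarith
  have h2ε : 2 * εN = lam Λ (N + 1) - lam Λ N := by rw [hεN]; ring
  -- ball measure
  have hball : ∀ m : ℕ, 1 ≤ m → m ≤ N →
      μj (Ioo (lam Λ m - εN) (lam Λ m + εN)) = ENNReal.ofReal ((m : ℝ) ^ (-α)) := by
    intro m hm1 hmN
    have hmem : ∀ n : ℕ, lam Λ (n + 1) ∈ Ioo (lam Λ m - εN) (lam Λ m + εN) ↔ n + 1 = m := by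
      intro n
      constructor
      · intro hmemn
        by_contra hne
        rcases lt_or_gt_of_ne hne with hlt | hgt
        · -- n+1 < m
          obtain ⟨M, rfl⟩ : ∃ M, m = M + 1 := ⟨m - 1, by omega⟩
          have hM1 : 1 ≤ M := by omega
          have h1 : lam Λ (n + 1) ≤ lam Λ M := by
            rcases eq_or_lt_of_le (show n + 1 ≤ M by omega) with h | h
            · rw [h]
            · exact le_of_lt (lam_lt (n+1) M (by omega) h)
          have h2 : 2 * εN ≤ lam Λ (M + 1) - lam Λ M := by
            rw [h2ε]; exact gap_anti M N hM1 (by omega)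
          have := hmemn.1
          simp only [mem_Ioo] at hmemn
          linarith [hmemn.1]
        · -- m < n+1
          have h1 : lam Λ (m + 1) ≤ lam Λ (n + 1) := by
            rcases eq_or_lt_of_le (show m + 1 ≤ n + 1 by omega) with h | h
            · rw [h]
            · exact le_of_lt (lam_lt (m+1) (n+1) (by omega) h)
          have h2 : 2 * εN ≤ lam Λ (m + 1) - lam Λ m := by
            rw [h2ε]; exact gap_anti m N hm1 hmN
          simp only [mem_Ioo] at hmemn
          linarith [hmemn.2]
      · intro h
        rw [h]
        exact ⟨by linarith, by linarith⟩
    rw [hμ, Measure.sum_apply _ measurableSet_Ioo]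
    rw [tsum_eq_single (m - 1) ?_]
    · have hm : m - 1 + 1 = m := by omega
      rw [Measure.smul_apply, Measure.dirac_apply, smul_eq_mul,
        indicator_of_mem ((hmem (m-1)).mpr hm), hm]
      simp
    · intro b hb
      have hb' : b + 1 ≠ m := by omega
      rw [Measure.smul_apply, Measure.dirac_apply, smul_eq_mul,
        indicator_of_notMem (fun h => hb' ((hmem b).mp h))]
      simp
  -- measurability of the positivity set
  have hSF : SFinite μj := by rw [hμ]; infer_instance
  set S : Set ℝ := {x : ℝ | 0 < μj (Ioo (x - εN) (x + εN))} with hS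
  have hFmeas : Measurable fun x : ℝ => μj (Ioo (x - εN) (x + εN)) := by
    have hT : MeasurableSet {p : ℝ × ℝ | p.1 - εN < p.2 ∧ p.2 < p.1 + εN} :=
      (measurableSet_lt (measurable_fst.sub measurable_const) measurable_snd).inter
        (measurableSet_lt measurable_snd (measurable_fst.add measurable_const))
    have h := measurable_measure_prodMk_left (ν := μj) hT
    have hpre : ∀ x : ℝ, Prod.mk x ⁻¹' {p : ℝ × ℝ | p.1 - εN < p.2 ∧ p.2 < p.1 + εN}
        = Ioo (x - εN) (x + εN) := fun x => rfl
    simpa only [hpre] using h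
  have hSmeas : MeasurableSet S := measurableSet_lt measurable_const hFmeas
  have hmemS : ∀ m : ℕ, 1 ≤ m → m ≤ N → lam Λ m ∈ S := by
    intro m hm1 hmN
    show 0 < μj (Ioo (lam Λ m - εN) (lam Λ m + εN))
    rw [hball m hm1 hmN]
    exact ENNReal.ofReal_pos.mpr (Real.rpow_pos_of_pos (by exact_mod_cast hm1) _)
  -- main rewriting of the fractal integral
  have hres : μj.restrict S = Measure.sum fun n : ℕ =>
      (ENNReal.ofReal (((n + 1 : ℕ) : ℝ) ^ (-α)) • Measure.dirac (lam Λ (n + 1))).restrict S := by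
    conv_lhs => rw [hμ]
    exact Measure.restrict_sum _ hSmeas
  have hmain : fracIntegral μj q εN = ∑' n : ℕ, ∫⁻ x in S,
      μj (Ioo (x - εN) (x + εN)) ^ (q - 1)
        ∂(ENNReal.ofReal (((n + 1 : ℕ) : ℝ) ^ (-α)) • Measure.dirac (lam Λ (n + 1))) := by
    rw [fracIntegral, ← hS, hres, lintegral_sum_measure]
  have heach : ∀ n : ℕ, n < N → (∫⁻ x in S,
      μj (Ioo (x - εN) (x + εN)) ^ (q - 1)
        ∂(ENNReal.ofReal (((n + 1 : ℕ) : ℝ) ^ (-α)) • Measure.dirac (lam Λ (n + 1))))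
      = ENNReal.ofReal (((n + 1 : ℕ) : ℝ) ^ (-α * q)) := by
    intro n hn
    rw [Measure.restrict_smul, lintegral_smul_measure, setLIntegral_dirac, if_pos (hmemS (n+1) (by omega) (by omega)),
      hball (n+1) (by omega) (by omega)]
    set c : ℝ := ((n + 1 : ℕ) : ℝ) ^ (-α) with hc
    have hcpos : 0 < c := Real.rpow_pos_of_pos (by positivity) _
    have hne0 : ENNReal.ofReal c ≠ 0 := (ENNReal.ofReal_pos.mpr hcpos).ne'
    calc ENNReal.ofReal c * ENNReal.ofReal c ^ (q - 1)
        = ENNReal.ofReal c ^ (1 + (q - 1)) := by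
          rw [ENNReal.rpow_add _ _ hne0 ENNReal.ofReal_ne_top, ENNReal.rpow_one]
      _ = ENNReal.ofReal c ^ q := by ring_nf
      _ = ENNReal.ofReal (c ^ q) := ENNReal.ofReal_rpow_of_pos hcpos
      _ = ENNReal.ofReal (((n + 1 : ℕ) : ℝ) ^ (-α * q)) := by
          rw [hc, ← Real.rpow_mul (by positivity)]
  -- sum reindexing
  have hsum : ∑ n ∈ Finset.Icc 1 N, ((n : ℝ) ^ (-α * q))
      = ∑ n ∈ Finset.range N, (((n + 1 : ℕ) : ℝ) ^ (-α * q)) := by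
    rw [← Finset.Ico_add_one_right_eq_Icc, Finset.sum_Ico_eq_sum_range]
    exact Finset.sum_congr rfl fun k _ => by rw [add_comm 1 k]
  constructor
  · -- part 1
    rw [hsum, hmain, ENNReal.ofReal_sum_of_nonneg (fun n _ => by positivity)]
    calc ∑ n ∈ Finset.range N, ENNReal.ofReal (((n + 1 : ℕ) : ℝ) ^ (-α * q))
        = ∑ n ∈ Finset.range N, ∫⁻ x in S,
            μj (Ioo (x - εN) (x + εN)) ^ (q - 1)
              ∂(ENNReal.ofReal (((n + 1 : ℕ) : ℝ) ^ (-α)) • Measure.dirac (lam Λ (n + 1))) :=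
          Finset.sum_congr rfl fun n hn => (heach n (Finset.mem_range.mp hn)).symm
      _ ≤ _ := ENNReal.sum_le_tsum _
  · -- part 2
    have hanti : AntitoneOn (fun x : ℝ => x ^ (-(α * q))) (Icc (1:ℝ) (1 + (N:ℝ))) := by
      intro a ha b hb hab
      exact Real.rpow_le_rpow_of_nonpos (lt_of_lt_of_le one_pos ha.1) hab (by linarith)
    have hint := hanti.integral_le_sum
    have hval : ∫ x in (1:ℝ)..(1 + (N:ℝ)), x ^ (-(α * q))
        = ((1 + (N:ℝ)) ^ (1 - α * q) - 1) / (1 - α * q) := by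
      rw [integral_rpow (Or.inl (by linarith))]
      have he : -(α * q) + 1 = 1 - α * q := by ring
      rw [he, Real.one_rpow]
    have h1 : ((N : ℝ) ^ (1 - α * q) - 1) / (1 - α * q)
        ≤ ((1 + (N:ℝ)) ^ (1 - α * q) - 1) / (1 - α * q) := by
      have hnum : (N:ℝ) ^ (1 - α * q) ≤ (1 + (N:ℝ)) ^ (1 - α * q) :=
        Real.rpow_le_rpow (by positivity) (by linarith) (by linarith)
      gcongr <;> linarith [hnum]
    have h2 : ∑ i ∈ Finset.range N, ((1:ℝ) + (i:ℝ)) ^ (-(α * q))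
        = ∑ n ∈ Finset.Icc 1 N, ((n : ℝ) ^ (-α * q)) := by
      rw [hsum]
      exact Finset.sum_congr rfl fun k _ => by push_cast; rw [add_comm 1 (k:ℝ), neg_mul]
    simp only [neg_mul] at *
    rw [hval] at hint
    linarith [hint, h1, h2.ge, h2.le]
end
end
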